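/- For any nonzero vectors ψ₁, ψ₂ ∈ ℂ^k with ‖ψ₁‖ = ‖ψ₂‖ = 1, the operator A = |ψ₁⟩⟨ψ₂| − |ψ₂⟩⟨ψ₁| + ⟨ψ₁|ψ₂⟩·𝕀_k satisfies A A† ≤ 𝕀_k (i.e., 𝕀_k − A A† is positive semidefinite). -/

import Mathlib

open Matrix ComplexOrder

noncomputable section

lemma conj_dot {k : ℕ} (u v : Fin k → ℂ) :
    starRingEnd ℂ (star u ⬝ᵥ v) = star v ⬝ᵥ u := by
  simp [dotProduct, map_sum, mul_comm]

lemma vecMulVec_mulVec' {k : ℕ} (a b x : Fin k → ℂ) :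
    vecMulVec a b *ᵥ x = (b ⬝ᵥ x) • a := by
  ext i
  simp only [mulVec, vecMulVec_apply, dotProduct, Pi.smul_apply, smul_eq_mul,
    Finset.sum_mul]
  exact Finset.sum_congr rfl fun j _ => by ring

lemma vecMulVec_conjT {k : ℕ} (a b : Fin k → ℂ) :
    (vecMulVec a b)ᴴ = vecMulVec (star b) (star a) := by
  ext i j
  simp [conjTranspose_apply, vecMulVec_apply, mul_comm]

lemma cs_dot {k : ℕ} (u v : Fin k → ℂ) :
    (star u ⬝ᵥ v) * (star v ⬝ᵥ u) ≤ (star u ⬝ᵥ u) * (star v ⬝ᵥ v) := by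
  let u' : EuclideanSpace ℂ (Fin k) := (WithLp.equiv 2 _).symm u
  let v' : EuclideanSpace ℂ (Fin k) := (WithLp.equiv 2 _).symm v
  have h1 : star u ⬝ᵥ v = inner ℂ u' v' := by
    rw [dotProduct_comm]; rfl
  have h2 : star v ⬝ᵥ u = inner ℂ v' u' := by
    rw [dotProduct_comm]; rfl
  have h3 : star u ⬝ᵥ u = inner ℂ u' u' := by
    rw [dotProduct_comm]; rfl
  have h4 : star v ⬝ᵥ v = inner ℂ v' v' := by
    rw [dotProduct_comm]; rfl
  rw [h1, h2, h3, h4, inner_self_eq_norm_sq_to_K, inner_self_eq_norm_sq_to_K,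
    ← inner_conj_symm v' u', Complex.mul_conj']
  have h : ‖(inner ℂ u' v')‖ ^ 2 ≤ ‖u'‖ ^ 2 * ‖v'‖ ^ 2 := by
    nlinarith [norm_inner_le_norm (𝕜 := ℂ) u' v', norm_nonneg (inner ℂ u' v'),
      norm_nonneg u', norm_nonneg v']
  calc (‖(inner ℂ u' v')‖ : ℂ) ^ 2 = ((‖(inner ℂ u' v')‖ ^ 2 : ℝ) : ℂ) := by push_cast; ring
    _ ≤ ((‖u'‖ ^ 2 * ‖v'‖ ^ 2 : ℝ) : ℂ) := by exact_mod_cast h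
    _ = (‖u'‖ : ℂ) ^ 2 * (‖v'‖ : ℂ) ^ 2 := by push_cast; ring

theorem stmt0 (k : ℕ) (ψ₁ ψ₂ : Fin k → ℂ)
    (hψ₁ : ψ₁ ≠ 0) (hψ₂ : ψ₂ ≠ 0)
    (h₁ : star ψ₁ ⬝ᵥ ψ₁ = 1) (h₂ : star ψ₂ ⬝ᵥ ψ₂ = 1) :
    ((1 : Matrix (Fin k) (Fin k) ℂ)
      - (vecMulVec ψ₁ (star ψ₂) - vecMulVec ψ₂ (star ψ₁)
        + (star ψ₁ ⬝ᵥ ψ₂) • (1 : Matrix (Fin k) (Fin k) ℂ)) *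
        (vecMulVec ψ₁ (star ψ₂) - vecMulVec ψ₂ (star ψ₁)
        + (star ψ₁ ⬝ᵥ ψ₂) • (1 : Matrix (Fin k) (Fin k) ℂ))ᴴ).PosSemidef := by
  rw [posSemidef_iff_dotProduct_mulVec]
  constructor
  · simp only [IsHermitian, conjTranspose_sub, conjTranspose_one, conjTranspose_mul,
      conjTranspose_conjTranspose]
  · intro x
    have key : star x ⬝ᵥ (((1 : Matrix (Fin k) (Fin k) ℂ)
        - (vecMulVec ψ₁ (star ψ₂) - vecMulVec ψ₂ (star ψ₁)
          + (star ψ₁ ⬝ᵥ ψ₂) • (1 : Matrix (Fin k) (Fin k) ℂ)) *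
          (vecMulVec ψ₁ (star ψ₂) - vecMulVec ψ₂ (star ψ₁)
          + (star ψ₁ ⬝ᵥ ψ₂) • (1 : Matrix (Fin k) (Fin k) ℂ))ᴴ) *ᵥ x)
      = (star (ψ₁ - (star ψ₂ ⬝ᵥ ψ₁) • ψ₂) ⬝ᵥ (ψ₁ - (star ψ₂ ⬝ᵥ ψ₁) • ψ₂))
        * (star (x - (star ψ₂ ⬝ᵥ x) • ψ₂) ⬝ᵥ (x - (star ψ₂ ⬝ᵥ x) • ψ₂))
      - (star (ψ₁ - (star ψ₂ ⬝ᵥ ψ₁) • ψ₂) ⬝ᵥ (x - (star ψ₂ ⬝ᵥ x) • ψ₂))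
        * (star (x - (star ψ₂ ⬝ᵥ x) • ψ₂) ⬝ᵥ (ψ₁ - (star ψ₂ ⬝ᵥ ψ₁) • ψ₂)) := by
      simp only [conjTranspose_add, conjTranspose_sub, conjTranspose_smul, conjTranspose_one,
        vecMulVec_conjT, star_star, ← mulVec_mulVec, sub_mulVec, add_mulVec, one_mulVec,
        smul_mulVec, vecMulVec_mulVec', RCLike.star_def, conj_dot,
        mulVec_smul, dotProduct_sub, dotProduct_add, dotProduct_smul, sub_dotProduct,
        add_dotProduct, smul_dotProduct, star_sub, star_smul, smul_eq_mul,
        h₁, h₂]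
      ring
    rw [key]
    exact sub_nonneg.mpr (cs_dot _ _)
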